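/- For all real numbers λ, λ₊ with 0 < λ < λ₊, there exists a real number g₀ such that for every real g ≥ g₀ and every real σ with 0 < σ ≤ 4/3: if (log σ)² / σ ≥ λ₊ · g, then σ ≤ (log g)² / (λ · g). -/

import Mathlib

theorem asymptotic_inversion (lam lam' : ℝ) (hlam : 0 < lam) (hlt : lam < lam') :
    ∃ g₀ : ℝ, ∀ g : ℝ, g₀ ≤ g → ∀ σ : ℝ, 0 < σ → σ ≤ 4 / 3 →
      lam' * g ≤ (Real.log σ) ^ 2 / σ → σ ≤ (Real.log g) ^ 2 / (lam * g) := by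
  set c : ℝ := Real.sqrt (lam' / lam) with hc
  have hratio : 1 < lam' / lam := (one_lt_div hlam).mpr hlt
  have hc1 : 1 ≤ c := by
    rw [hc, show (1:ℝ) = Real.sqrt 1 by simp]
    exact Real.sqrt_le_sqrt hratio.le
  have hc2 : c ^ 2 = lam' / lam := Real.sq_sqrt (by linarith)
  refine ⟨max (Real.exp (Real.sqrt lam)) (Real.exp 1), fun g hg σ hσ hσ43 hmain => ?_⟩
  have hg1 : Real.exp 1 ≤ g := le_trans (le_max_right _ _) hg
  have hgpos : 0 < g := lt_of_lt_of_le (Real.exp_pos 1) hg1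
  set L : ℝ := Real.log g with hL
  have hL1 : 1 ≤ L := by
    rw [hL, show (1:ℝ) = Real.log (Real.exp 1) by simp]
    exact Real.log_le_log (Real.exp_pos 1) hg1
  have hLlam : lam ≤ L ^ 2 := by
    have h1 : Real.sqrt lam ≤ L := by
      rw [hL, show Real.sqrt lam = Real.log (Real.exp (Real.sqrt lam)) by simp]
      exact Real.log_le_log (Real.exp_pos _) (le_trans (le_max_left _ _) hg)
    calc lam = Real.sqrt lam ^ 2 := (Real.sq_sqrt hlam.le).symm
      _ ≤ L ^ 2 := by
          apply pow_le_pow_left₀ (Real.sqrt_nonneg _) h1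
  by_contra hcon
  push_neg at hcon
  -- log²σ ≥ λ' g σ
  have h1 : lam' * g * σ ≤ (Real.log σ) ^ 2 := by
    have := mul_le_mul_of_nonneg_right hmain hσ.le
    rwa [div_mul_cancel₀ _ hσ.ne'] at this
  have hlgpos : 0 < lam * g := mul_pos hlam hgpos
  have h2 : (c * L) ^ 2 < (Real.log σ) ^ 2 := by
    have hst : lam' * g * (L ^ 2 / (lam * g)) < lam' * g * σ :=
      mul_lt_mul_of_pos_left hcon (mul_pos (hlam.trans hlt) hgpos)
    have heq : lam' * g * (L ^ 2 / (lam * g)) = (c * L) ^ 2 := by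
      rw [mul_pow, hc2]
      field_simp
    linarith
  have hcL : 0 ≤ c * L := by positivity
  have h3 : c * L < |Real.log σ| := by
    have : (c * L) ^ 2 < |Real.log σ| ^ 2 := by rwa [sq_abs]
    exact lt_of_pow_lt_pow_left₀ 2 (abs_nonneg _) this
  have hls : Real.log σ ≤ 1 / 3 := by
    have := Real.log_le_sub_one_of_pos (show (0:ℝ) < 4/3 by norm_num)
    have := Real.log_le_log hσ hσ43
    linarith
  have hlsneg : Real.log σ < -(c * L) := by
    rcases abs_cases (Real.log σ) with ⟨he, _⟩ | ⟨he, _⟩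
    · nlinarith
    · linarith [he ▸ h3]
  have hσlt : σ < Real.exp (-L) := by
    calc σ = Real.exp (Real.log σ) := (Real.exp_log hσ).symm
      _ < Real.exp (-(c*L)) := Real.exp_lt_exp.mpr hlsneg
      _ ≤ Real.exp (-L) := Real.exp_le_exp.mpr (by nlinarith)
  have hexp : Real.exp (-L) = 1 / g := by
    rw [Real.exp_neg, hL, Real.exp_log hgpos, one_div]
  have : L ^ 2 / (lam * g) < 1 / g := by
    calc L ^ 2 / (lam * g) < σ := hcon
      _ < 1 / g := hexp ▸ hσlt
  rw [div_lt_div_iff₀ hlgpos hgpos] at this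
  nlinarith
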